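/- Let Σ = {a,b} and let L = {(aⁿ·b^ω, a²ⁿ·b^ω, a³ⁿ·b^ω) : n ∈ ℕ} ⊆ (Σ^ω)³, whose encodings are the words (a,a,a)ⁿ(b,a,a)ⁿ(b,b,a)ⁿ(b,b,b)^ω over Σ³. Then L is recognized by a NAPA over Σ with three directions, but there is no APA over the alphabet Σ³ that accepts exactly the encodings enc(w₁,w₂,w₃) of the tuples (w₁,w₂,w₃) ∈ L. -/

import Mathlib

/-! ### Positive Boolean formulas -/

/-- Positive Boolean formulas over a set of atoms `Q`, built from atoms,
conjunction, disjunction and the constants true and false. -/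
inductive PosBool (Q : Type u) : Type u
  | tt : PosBool Q
  | ff : PosBool Q
  | var : Q → PosBool Q
  | and : PosBool Q → PosBool Q → PosBool Q
  | or : PosBool Q → PosBool Q → PosBool Q

namespace PosBool

/-- `Sat C f` holds iff the valuation making exactly the elements of `C` true satisfies `f`. -/
def Sat {Q : Type u} (C : Set Q) : PosBool Q → Prop
  | tt => True
  | ff => False
  | var q => q ∈ C
  | and f g => Sat C f ∧ Sat C g
  | or f g => Sat C f ∨ Sat C g

/-- A positive Boolean formula that is a disjunction of atoms. -/
inductive IsDisj {Q : Type u} : PosBool Q → Prop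
  | ff : IsDisj ff
  | var (q : Q) : IsDisj (var q)
  | or {f g : PosBool Q} : IsDisj f → IsDisj g → IsDisj (f.or g)

/-- Syntactic size of a positive Boolean formula. -/
def size {Q : Type u} : PosBool Q → ℕ
  | tt => 1
  | ff => 1
  | var _ => 1
  | and f g => size f + size g + 1
  | or f g => size f + size g + 1

end PosBool

/-! ### Alternating Asynchronous Parity Automata -/

/-- An Alternating Asynchronous Parity Automaton (AAPA) over the alphabet `σ`
with state set `Q` and `n` directions. -/
structure AAPA (σ : Type u) (Q : Type v) (n : ℕ) where
  init : PosBool Q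
  trans : Q → σ → Fin n → PosBool Q
  prio : Q → ℕ

namespace AAPA

variable {σ : Type u} {Q : Type v} {n : ℕ}

/-- A run of an AAPA `A` on the tuple of `ω`-words `w`: a tree of nodes
(coded as lists of natural numbers, the root being `[]`), whose non-root nodes
are labeled with states and which carry offset counters, subject to the
local consistency conditions of AAPA runs. -/
structure Run (A : AAPA σ Q n) (w : Fin n → ℕ → σ) where
  tree : Set (List ℕ)
  label : List ℕ → Q
  cnt : List ℕ → Fin n → ℕ
  root_mem : [] ∈ tree
  prefix_closed : ∀ (t : List ℕ) (m : ℕ), t ++ [m] ∈ tree → t ∈ tree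
  has_child : ∀ t ∈ tree, ∃ m : ℕ, t ++ [m] ∈ tree
  cnt_init : ∀ t ∈ tree, t.length ≤ 1 → cnt t = 0
  init_sat : PosBool.Sat {q | ∃ m : ℕ, [m] ∈ tree ∧ label [m] = q} A.init
  step : ∀ t ∈ tree, t ≠ [] → ∃ d : Fin n,
    (∀ m : ℕ, t ++ [m] ∈ tree →
      cnt (t ++ [m]) = Function.update (cnt t) d (cnt t d + 1)) ∧
    PosBool.Sat {q | ∃ m : ℕ, t ++ [m] ∈ tree ∧ label (t ++ [m]) = q}
      (A.trans (label t) (w d (cnt t d)) d)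

variable {A : AAPA σ Q n} {w : Fin n → ℕ → σ}

/-- An infinite path through a run, starting at the root. -/
def Run.IsPath (r : A.Run w) (p : ℕ → List ℕ) : Prop :=
  p 0 = [] ∧ ∀ i : ℕ, (∃ m : ℕ, p (i + 1) = p i ++ [m]) ∧ p (i + 1) ∈ r.tree

/-- A run is accepting iff on every infinite path the least priority occurring
infinitely often is even. -/
def Run.Accepting (r : A.Run w) : Prop :=
  ∀ p : ℕ → List ℕ, r.IsPath p →
    Even (sInf {c : ℕ | ∀ N : ℕ, ∃ i : ℕ, N ≤ i ∧ A.prio (r.label (p i)) = c})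

/-- The language of an AAPA: the set of tuples of `ω`-words on which it has an
accepting run. -/
def lang (A : AAPA σ Q n) : Set (Fin n → ℕ → σ) :=
  {w | ∃ r : A.Run w, r.Accepting}

/-- A Nondeterministic Asynchronous Parity Automaton (NAPA) is an AAPA whose
initial condition and transitions are disjunctions of states. -/
def IsNondet (A : AAPA σ Q n) : Prop :=
  A.init.IsDisj ∧ ∀ (q : Q) (a : σ) (d : Fin n), (A.trans q a d).IsDisj

end AAPA

/-- The two-letter alphabet `Σ = {a, b}`. -/
inductive AB : Type
  | a : AB
  | b : AB
  deriving DecidableEq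

instance : Fintype AB := ⟨{AB.a, AB.b}, fun x => by cases x <;> simp⟩

/-- The `ω`-word `aᵐ·b^ω`. -/
def abWord (m : ℕ) : ℕ → AB := fun i => if i < m then AB.a else AB.b

/-- The language `L = {(aⁿ·b^ω, a²ⁿ·b^ω, a³ⁿ·b^ω) : n ∈ ℕ}`. -/
def abLang : Set (Fin 3 → ℕ → AB) :=
  {w | ∃ m : ℕ, w 0 = abWord m ∧ w 1 = abWord (2 * m) ∧ w 2 = abWord (3 * m)}

/-- The encoding of a tuple of `ω`-words as a single `ω`-word over the product
alphabet: `enc(w₁,…,wₙ)(j) = (w₁(j),…,wₙ(j))`. -/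
def encTuple {σ : Type u} {n : ℕ} (w : Fin n → ℕ → σ) : ℕ → Fin n → σ :=
  fun j i => w i j

/-- The language of single `ω`-words of an automaton with one direction. -/
def lang1 {Γ : Type u} {Q : Type v} (A : AAPA Γ Q 1) : Set (ℕ → Γ) :=
  {u | (fun _ => u) ∈ A.lang}


namespace Part1

abbrev St : Type := Fin 6 × Bool

def ddir : Fin 6 → Fin 3
  | ⟨0,_⟩ => 0 | ⟨1,_⟩ => 1 | ⟨2,_⟩ => 1 | ⟨3,_⟩ => 2 | ⟨4,_⟩ => 2 | ⟨5,_⟩ => 2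

def nxt : Fin 6 → Fin 6
  | ⟨0,_⟩ => 1 | ⟨1,_⟩ => 2 | ⟨2,_⟩ => 3 | ⟨3,_⟩ => 4 | ⟨4,_⟩ => 5 | ⟨5,_⟩ => 0

def trF (q : St) (σ : AB) (d : Fin 3) : PosBool St :=
  if d = ddir q.1 then
    if q.2 = true then
      if σ = AB.b then PosBool.var (nxt q.1, true) else PosBool.ff
    else
      if σ = AB.a then PosBool.var (nxt q.1, false)
      else if q.1 = (⟨0, by omega⟩ : Fin 6) then PosBool.var ((⟨1, by omega⟩ : Fin 6), true)
      else PosBool.ff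
  else PosBool.ff

def BA : AAPA AB St 3 where
  init := PosBool.var ((⟨0, by omega⟩ : Fin 6), false)
  trans := trF
  prio q := if q.2 = true then 0 else 1

lemma BA_trans : BA.trans = trF := rfl

lemma BA_nondet : BA.IsNondet := by
  refine ⟨PosBool.IsDisj.var _, ?_⟩
  intro q σ d
  rw [BA_trans]
  unfold trF
  split_ifs <;> first | exact PosBool.IsDisj.var _ | exact PosBool.IsDisj.ff

/-- counters after `k` steps of the canonical interleaving pattern -/
def cntF (k : ℕ) : Fin 3 → ℕ
  | ⟨0,_⟩ => (k+5)/6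
  | ⟨1,_⟩ => (k+4)/6 + (k+3)/6
  | ⟨2,_⟩ => (k+2)/6 + (k+1)/6 + k/6

lemma cntF_zero : cntF 0 = 0 := by
  funext x
  match x with
  | ⟨0,_⟩ => rfl
  | ⟨1,_⟩ => rfl
  | ⟨2,_⟩ => rfl

/-- the direction used at step `k` -/
def dirAt (k : ℕ) : Fin 3 := ddir ⟨k % 6, Nat.mod_lt _ (by omega)⟩

lemma cntF_step (k : ℕ) :
    cntF (k+1) = Function.update (cntF k) (dirAt k) (cntF k (dirAt k) + 1) := by
  obtain ⟨j, c, hc, rfl⟩ : ∃ j c, c < 6 ∧ k = 6*j + c := ⟨k/6, k%6, by omega, by omega⟩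
  funext x
  obtain ⟨xv, hx⟩ := x
  interval_cases c <;> interval_cases xv <;>
    simp [dirAt, cntF, ddir, Nat.mul_add_mod, Function.update_apply, Fin.ext_iff] <;> omega

/-- state at step `k` (label of the node at depth `k+1`) -/
def stF (m k : ℕ) : St := (⟨k % 6, Nat.mod_lt _ (by omega)⟩, decide (6*m < k))

lemma nxt_mod (k : ℕ) (h : k % 6 < 6) (h' : (k+1) % 6 < 6) :
    nxt ⟨k % 6, h⟩ = ⟨(k+1) % 6, h'⟩ := by
  obtain ⟨j, c, hc, rfl⟩ : ∃ j c, c < 6 ∧ k = 6*j + c := ⟨k/6, k%6, by omega, by omega⟩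
  have : (6*j+c) % 6 = c := by omega
  simp only [this]
  interval_cases c <;> (apply Fin.ext; simp [nxt] <;> omega)

lemma trans_stF (m k : ℕ) :
    BA.trans (stF m k) (if k / 6 < m then AB.a else AB.b) (dirAt k) =
      PosBool.var (stF m (k+1)) := by
  have hmod : k % 6 < 6 := by omega
  have hmod' : (k+1) % 6 < 6 := by omega
  rw [BA_trans]
  unfold trF stF dirAt
  rw [if_pos rfl]
  by_cases h1 : k / 6 < m
  · rw [if_pos h1, if_neg (by simp; omega), if_pos rfl, nxt_mod k hmod hmod']
    simp only [PosBool.var.injEq, Prod.mk.injEq]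
    refine ⟨trivial, by simp; omega⟩
  · rw [if_neg h1]
    by_cases h2 : k % 6 = 0
    · by_cases h3 : k = 6*m
      · rw [if_neg (by simp; omega), if_neg (by simp), if_pos (by apply Fin.ext; simpa using h2)]
        simp only [PosBool.var.injEq, Prod.mk.injEq]
        refine ⟨by apply Fin.ext; simp; omega, by simp; omega⟩
      · rw [if_pos (by simp; omega), if_pos rfl, nxt_mod k hmod hmod']
        simp only [PosBool.var.injEq, Prod.mk.injEq]
        refine ⟨trivial, by simp; omega⟩
    · rw [if_pos (by simp; omega), if_pos rfl, nxt_mod k hmod hmod']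
      simp only [PosBool.var.injEq, Prod.mk.injEq]
      refine ⟨trivial, by simp; omega⟩


def lineTree : Set (List ℕ) := {t | ∀ x ∈ t, x = 0}

lemma BA_prio : BA.prio = fun q : St => if q.2 = true then 0 else 1 := rfl

lemma prio_stF (m k : ℕ) : BA.prio (stF m k) = if 6*m < k then 0 else 1 := by
  rw [BA_prio]; by_cases h : 6*m < k <;> simp [stF, h]

section Words
variable {w : Fin 3 → ℕ → AB} {m : ℕ}
variable (hw0 : w 0 = abWord m) (hw1 : w 1 = abWord (2*m)) (hw2 : w 2 = abWord (3*m))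
include hw0 hw1 hw2

lemma letter_eq (k : ℕ) :
    w (dirAt k) (cntF k (dirAt k)) = if k / 6 < m then AB.a else AB.b := by
  obtain ⟨j, c, hc, rfl⟩ : ∃ j c, c < 6 ∧ k = 6*j + c := ⟨k/6, k%6, by omega, by omega⟩
  interval_cases c <;>
    simp only [dirAt, cntF, ddir, Nat.mul_add_mod]
  all_goals (first | rw [hw0] | rw [hw1] | rw [hw2])
  all_goals simp only [abWord]
  all_goals by_cases h : j < m
  all_goals first
    | rw [if_pos (by omega), if_pos (by omega)]
    | rw [if_neg (by omega), if_neg (by omega)]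

lemma complete : w ∈ BA.lang := by
  refine ⟨⟨lineTree, fun t => stF m (t.length - 1), fun t => cntF (t.length - 1),
    by simp [lineTree], ?_, ?_, ?_, ?_, ?_⟩, ?_⟩
  · intro t mm h x hx
    exact h x (List.mem_append_left _ hx)
  · intro t ht
    refine ⟨0, ?_⟩
    intro x hx
    rcases List.mem_append.1 hx with h | h
    · exact ht x h
    · simpa using h
  · intro t ht hlen
    rw [show t.length - 1 = 0 from by omega, cntF_zero]
  · refine ⟨0, ?_, ?_⟩
    · intro x hx; simpa using hx
    · simp [stF]
  · intro t ht hne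
    have hlen : 1 ≤ t.length := by
      cases t with
      | nil => exact absurd rfl hne
      | cons x l => simp
    refine ⟨dirAt (t.length - 1), ?_, ?_⟩
    · intro mm hmem
      simp only [List.length_append, List.length_cons, List.length_nil]
      rw [show t.length + 1 - 1 = (t.length - 1) + 1 from by omega]
      exact cntF_step _
    · rw [letter_eq hw0 hw1 hw2, trans_stF]
      refine ⟨0, ?_, ?_⟩
      · intro x hx
        rcases List.mem_append.1 hx with h | h
        · exact ht x h
        · simpa using h
      · simp only [List.length_append, List.length_cons, List.length_nil]
        congr 1
        omega
  · intro p hp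
    simp only
    have hplen : ∀ i, (p i).length = i := by
      intro i
      induction i with
      | zero => rw [hp.1]; rfl
      | succ n ih =>
        obtain ⟨mm, hm⟩ := (hp.2 n).1
        rw [hm]; simp [ih]
    have hS : {c : ℕ | ∀ N : ℕ, ∃ i : ℕ, N ≤ i ∧
        BA.prio (stF m ((p i).length - 1)) = c} = {0} := by
      ext c
      simp only [Set.mem_setOf_eq, Set.mem_singleton_iff]
      constructor
      · intro hc
        obtain ⟨i, hi, hci⟩ := hc (6*m+2)
        rw [hplen i, prio_stF, if_pos (by omega)] at hci
        exact hci.symm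
      · rintro rfl N
        refine ⟨max N (6*m+2), le_max_left _ _, ?_⟩
        rw [hplen, prio_stF, if_pos (by omega)]
    rw [hS, csInf_singleton]
    exact Even.zero

end Words

/-- transition relation along a "good" path of a run -/
def Rrel (w : Fin 3 → ℕ → AB) (q : St) (c : Fin 3 → ℕ) (q' : St) : Prop :=
  (q.2 = false ∧ w (ddir q.1) (c (ddir q.1)) = AB.a ∧ q' = (nxt q.1, false)) ∨
  (q.1 = (⟨0, by omega⟩ : Fin 6) ∧ q.2 = false ∧ w (ddir q.1) (c (ddir q.1)) = AB.b ∧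
    q' = ((⟨1, by omega⟩ : Fin 6), true)) ∨
  (q.2 = true ∧ w (ddir q.1) (c (ddir q.1)) = AB.b ∧ q' = (nxt q.1, true))

lemma sat_inv {C : Set St} {q : St} {σ : AB} {d : Fin 3}
    (h : PosBool.Sat C (BA.trans q σ d)) :
    d = ddir q.1 ∧
      ((q.2 = false ∧ σ = AB.a ∧ (nxt q.1, false) ∈ C) ∨
       (q.1 = (⟨0, by omega⟩ : Fin 6) ∧ q.2 = false ∧ σ = AB.b ∧
         (((⟨1, by omega⟩ : Fin 6), true) : St) ∈ C) ∨
       (q.2 = true ∧ σ = AB.b ∧ (nxt q.1, true) ∈ C)) := by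
  rw [BA_trans] at h
  unfold trF at h
  split_ifs at h with h1 h2 h3 h4 h5 <;>
    first
      | exact h.elim
      | exact ⟨h1, Or.inr (Or.inr ⟨h2, h3, h⟩)⟩
      | exact ⟨h1, Or.inl ⟨by revert h2; cases q.2 <;> simp, h4, h⟩⟩
      | exact ⟨h1, Or.inr (Or.inl ⟨h5, by revert h2; cases q.2 <;> simp, by
          revert h4; cases σ <;> simp, h⟩)⟩

lemma spec0 (u : ℕ) : dirAt (6*u) = 0 ∧ cntF (6*u) (dirAt (6*u)) = u := by
  have h : (6*u) % 6 = 0 := by omega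
  unfold dirAt
  simp only [h]
  refine ⟨rfl, ?_⟩
  show (6*u+5)/6 = u
  omega

lemma spec1 (u e : ℕ) (he : e < 2) :
    dirAt (6*u+1+e) = 1 ∧ cntF (6*u+1+e) (dirAt (6*u+1+e)) = 2*u + e := by
  unfold dirAt
  interval_cases e
  · have h : (6*u+1+0) % 6 = 1 := by omega
    simp only [h]
    refine ⟨rfl, ?_⟩
    show (6*u+1+0+4)/6 + (6*u+1+0+3)/6 = 2*u+0
    omega
  · have h : (6*u+1+1) % 6 = 2 := by omega
    simp only [h]
    refine ⟨rfl, ?_⟩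
    show (6*u+1+1+4)/6 + (6*u+1+1+3)/6 = 2*u+1
    omega

lemma spec2 (u e : ℕ) (he : e < 3) :
    dirAt (6*u+3+e) = 2 ∧ cntF (6*u+3+e) (dirAt (6*u+3+e)) = 3*u + e := by
  unfold dirAt
  interval_cases e
  · have h : (6*u+3+0) % 6 = 3 := by omega
    simp only [h]
    refine ⟨rfl, ?_⟩
    show (6*u+3+0+2)/6 + (6*u+3+0+1)/6 + (6*u+3+0)/6 = 3*u+0
    omega
  · have h : (6*u+3+1) % 6 = 4 := by omega
    simp only [h]
    refine ⟨rfl, ?_⟩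
    show (6*u+3+1+2)/6 + (6*u+3+1+1)/6 + (6*u+3+1)/6 = 3*u+1
    omega
  · have h : (6*u+3+2) % 6 = 5 := by omega
    simp only [h]
    refine ⟨rfl, ?_⟩
    show (6*u+3+2+2)/6 + (6*u+3+2+1)/6 + (6*u+3+2)/6 = 3*u+2
    omega

lemma sound {w : Fin 3 → ℕ → AB} (hw : w ∈ BA.lang) : w ∈ abLang := by
  obtain ⟨r, hacc⟩ := hw
  have exAll : ∀ t : {t : List ℕ // t ∈ r.tree}, ∃ t' : {t : List ℕ // t ∈ r.tree},
      (∃ mm : ℕ, t'.1 = t.1 ++ [mm]) ∧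
      (t.1 = [] → r.label t'.1 = ((⟨0, by omega⟩ : Fin 6), false)) ∧
      (t.1 ≠ [] → Rrel w (r.label t.1) (r.cnt t.1) (r.label t'.1) ∧
        r.cnt t'.1 = Function.update (r.cnt t.1) (ddir (r.label t.1).1)
          (r.cnt t.1 (ddir (r.label t.1).1) + 1)) := by
    rintro ⟨t, ht⟩
    by_cases hne : t = []
    · subst hne
      have hinit : ∃ mm : ℕ, [mm] ∈ r.tree ∧
          r.label [mm] = ((⟨0, by omega⟩ : Fin 6), false) := r.init_sat
      obtain ⟨mm, hmem, hlab⟩ := hinit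
      exact ⟨⟨[] ++ [mm], by simpa using hmem⟩, ⟨mm, rfl⟩,
        fun _ => by simpa using hlab, fun hne => absurd rfl hne⟩
    · obtain ⟨d, hcnt, hsat⟩ := r.step t ht hne
      obtain ⟨hd, hcase⟩ := sat_inv hsat
      subst hd
      rcases hcase with ⟨hph, hlet, mem⟩ | ⟨h0, hph, hlet, mem⟩ | ⟨hph, hlet, mem⟩
      · obtain ⟨mm, hmem, hlab⟩ := mem
        exact ⟨⟨t ++ [mm], hmem⟩, ⟨mm, rfl⟩, fun h => absurd h hne,
          fun _ => ⟨Or.inl ⟨hph, hlet, hlab.symm ▸ rfl⟩, hcnt mm hmem⟩⟩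
      · obtain ⟨mm, hmem, hlab⟩ := mem
        exact ⟨⟨t ++ [mm], hmem⟩, ⟨mm, rfl⟩, fun h => absurd h hne,
          fun _ => ⟨Or.inr (Or.inl ⟨h0, hph, hlet, hlab.symm ▸ rfl⟩), hcnt mm hmem⟩⟩
      · obtain ⟨mm, hmem, hlab⟩ := mem
        exact ⟨⟨t ++ [mm], hmem⟩, ⟨mm, rfl⟩, fun h => absurd h hne,
          fun _ => ⟨Or.inr (Or.inr ⟨hph, hlet, hlab.symm ▸ rfl⟩), hcnt mm hmem⟩⟩
  choose f hchild hroot hstep using exAll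
  let p0 : {t : List ℕ // t ∈ r.tree} := ⟨[], r.root_mem⟩
  let pp : ℕ → {t : List ℕ // t ∈ r.tree} := fun i => f^[i] p0
  let p : ℕ → List ℕ := fun i => (pp i).1
  have hsucc : ∀ i, pp (i+1) = f (pp i) := fun i => Function.iterate_succ_apply' f i p0
  have hpath : r.IsPath p := by
    refine ⟨rfl, fun i => ⟨?_, (pp (i+1)).2⟩⟩
    obtain ⟨mm, hm⟩ := hchild (pp i)
    refine ⟨mm, ?_⟩
    show (pp (i+1)).1 = (pp i).1 ++ [mm]
    rw [hsucc i]
    exact hm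
  have hlen : ∀ i, (p i).length = i := by
    intro i
    induction i with
    | zero => rfl
    | succ n ih =>
      obtain ⟨mm, hm⟩ := hchild (pp n)
      show ((pp (n+1)).1).length = n + 1
      rw [hsucc n, hm]
      have ih' : ((pp n).1).length = n := ih
      simp only [List.length_append, List.length_cons, List.length_nil]
      omega
  have hnemp : ∀ i, p (i+1) ≠ [] := by
    intro i h
    have h2 := hlen (i+1)
    rw [h] at h2
    simp at h2
  have hR : ∀ i, Rrel w (r.label (p (i+1))) (r.cnt (p (i+1))) (r.label (p (i+1+1))) ∧
      r.cnt (p (i+1+1)) = Function.update (r.cnt (p (i+1))) (ddir (r.label (p (i+1))).1)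
        (r.cnt (p (i+1)) (ddir (r.label (p (i+1))).1) + 1) := by
    intro i
    have h := hstep (pp (i+1)) (hnemp i)
    show Rrel w (r.label (pp (i+1)).1) _ (r.label (pp (i+1+1)).1) ∧
      r.cnt (pp (i+1+1)).1 = _
    rw [hsucc (i+1)]
    exact h
  have hlab0 : r.label (p 1) = ((⟨0, by omega⟩ : Fin 6), false) := by
    have h := hroot p0 rfl
    show r.label (pp 1).1 = _
    rw [show (1:ℕ) = 0 + 1 from rfl, hsucc 0]
    exact h
  have hfin : ∀ i, (r.label (p (i+1))).1 = ⟨i % 6, Nat.mod_lt _ (by omega)⟩ := by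
    intro i
    induction i with
    | zero => rw [hlab0]
    | succ n ih =>
      rcases (hR n).1 with ⟨_, _, h3⟩ | ⟨h0, _, _, h3⟩ | ⟨_, _, h3⟩
      · rw [h3]
        show nxt (r.label (p (n+1))).1 = _
        rw [ih]
        exact nxt_mod n _ _
      · rw [h3]
        show (⟨1, by omega⟩ : Fin 6) = _
        rw [ih] at h0
        have h6 : n % 6 = 0 := by simpa using congrArg Fin.val h0
        apply Fin.ext
        simp
        omega
      · rw [h3]
        show nxt (r.label (p (n+1))).1 = _
        rw [ih]
        exact nxt_mod n _ _
  have hcntF : ∀ i, r.cnt (p (i+1)) = cntF i := by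
    intro i
    induction i with
    | zero =>
      rw [cntF_zero]
      exact r.cnt_init _ (pp 1).2 (by rw [hlen 1])
    | succ n ih =>
      rw [(hR n).2, ih, hfin n]
      exact (cntF_step n).symm
  have hmono : ∀ i, (r.label (p (i+1))).2 = true → (r.label (p (i+1+1))).2 = true := by
    intro i h
    rcases (hR i).1 with ⟨h1, _, _⟩ | ⟨_, h1, _, _⟩ | ⟨_, _, h3⟩
    · rw [h1] at h; simp at h
    · rw [h1] at h; simp at h
    · rw [h3]
  by_cases hex : ∃ i, (r.label (p (i+1))).2 = true
  case neg =>
    exfalso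
    push_neg at hex
    have hprio : ∀ i, BA.prio (r.label (p (i+1))) = 1 := by
      intro i
      rw [BA_prio]
      simp only
      rw [if_neg (hex i)]
    have heven := hacc p hpath
    have hSet : {c : ℕ | ∀ N : ℕ, ∃ i : ℕ, N ≤ i ∧ BA.prio (r.label (p i)) = c} = {1} := by
      ext c
      simp only [Set.mem_setOf_eq, Set.mem_singleton_iff]
      constructor
      · intro hc
        obtain ⟨i, hi, hci⟩ := hc 1
        obtain ⟨i', rfl⟩ : ∃ i', i = i' + 1 := ⟨i - 1, by omega⟩
        rw [hprio i'] at hci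
        exact hci.symm
      · rintro rfl N
        exact ⟨N + 1, by omega, hprio N⟩
    rw [hSet, csInf_singleton] at heven
    simp at heven
  case pos =>
    haveI : DecidablePred fun i : ℕ => (r.label (p (i+1))).2 = true :=
      fun i => inferInstance
    set I := Nat.find hex with hIdef
    have hItrue : (r.label (p (I+1))).2 = true := Nat.find_spec hex
    have hImin : ∀ i, i < I → (r.label (p (i+1))).2 = false := by
      intro i hi
      have h := Nat.find_min hex hi
      simpa using h
    have hI1 : 1 ≤ I := by
      by_contra h
      have h0 : I = 0 := by omega
      rw [h0, hlab0] at hItrue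
      simp at hItrue
    have hcase := (hR (I-1)).1
    rw [show I - 1 + 1 = I from by omega] at hcase
    have hfinI := hfin (I-1)
    rw [show I - 1 + 1 = I from by omega] at hfinI
    have hImfalse : (r.label (p I)).2 = false := by
      have h := hImin (I-1) (by omega)
      rw [show I - 1 + 1 = I from by omega] at h
      exact h
    rcases hcase with ⟨_, _, h3⟩ | ⟨h0, _, _, _⟩ | ⟨hph, _, _⟩
    · rw [h3] at hItrue; simp at hItrue
    case inr.inr => rw [hph] at hImfalse; simp at hImfalse
    case inr.inl =>
    have h6 : (I-1) % 6 = 0 := by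
      rw [hfinI] at h0
      simpa using congrArg Fin.val h0
    obtain ⟨j, hI6⟩ : ∃ j, I = 6*j + 1 := ⟨(I-1)/6, by omega⟩
    have hphase : ∀ i, (r.label (p (i+1))).2 = true ↔ I ≤ i := by
      intro i
      constructor
      · intro h
        by_contra hlt
        push_neg at hlt
        rw [hImin i hlt] at h
        simp at h
      · intro h
        obtain ⟨e, rfl⟩ : ∃ e, i = I + e := ⟨i - I, by omega⟩
        clear h
        induction e with
        | zero => exact hItrue
        | succ n ih =>
          have h2 := hmono (I + n) ih
          exact h2
    have hletter : ∀ k, w (dirAt k) (cntF k (dirAt k)) =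
        (if k < 6*j then AB.a else AB.b) := by
      intro k
      have hf := hfin k
      have hc := hcntF k
      rcases (hR k).1 with ⟨hph2, hlet, h3⟩ | ⟨h02, hph2, hlet, h3⟩ | ⟨hph2, hlet, h3⟩
      · have hnle : ¬ I ≤ k + 1 := by
          intro hle
          have h4 := (hphase (k+1)).2 hle
          rw [h3] at h4
          simp at h4
        rw [if_pos (by omega)]
        rw [hf, hc] at hlet
        exact hlet
      · have h4 : I ≤ k+1 := (hphase (k+1)).1 (by rw [h3])
        have h5 : ¬ I ≤ k := by
          intro hle
          have h7 := (hphase k).2 hle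
          rw [hph2] at h7
          simp at h7
        rw [if_neg (by omega)]
        rw [hf, hc] at hlet
        exact hlet
      · have h5 : I ≤ k := (hphase k).1 hph2
        rw [if_neg (by omega)]
        rw [hf, hc] at hlet
        exact hlet
    refine ⟨j, ?_, ?_, ?_⟩
    · funext pos
      have h := hletter (6*pos)
      rw [(spec0 pos).2, (spec0 pos).1] at h
      rw [h]
      simp only [abWord]
      by_cases h2 : pos < j
      · rw [if_pos (by omega), if_pos (by omega)]
      · rw [if_neg (by omega), if_neg (by omega)]
    · funext pos
      obtain ⟨u, e, he, rfl⟩ : ∃ u e, e < 2 ∧ pos = 2*u + e :=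
        ⟨pos/2, pos%2, by omega, by omega⟩
      have h := hletter (6*u+1+e)
      rw [(spec1 u e he).2, (spec1 u e he).1] at h
      rw [h]
      simp only [abWord]
      by_cases h2 : 2*u+e < 2*j
      · rw [if_pos (by omega), if_pos (by omega)]
      · rw [if_neg (by omega), if_neg (by omega)]
    · funext pos
      obtain ⟨u, e, he, rfl⟩ : ∃ u e, e < 3 ∧ pos = 3*u + e :=
        ⟨pos/3, pos%3, by omega, by omega⟩
      have h := hletter (6*u+3+e)
      rw [(spec2 u e he).2, (spec2 u e he).1] at h
      rw [h]
      simp only [abWord]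
      by_cases h2 : 3*u+e < 3*j
      · rw [if_pos (by omega), if_pos (by omega)]
      · rw [if_neg (by omega), if_neg (by omega)]

theorem part1 : ∃ (Q : Type) (_ : Fintype Q) (_ : Nonempty Q) (B : AAPA AB Q 3),
    B.IsNondet ∧ B.lang = abLang := by
  refine ⟨St, inferInstance, inferInstance, BA, BA_nondet, ?_⟩
  ext w
  constructor
  · exact sound
  · rintro ⟨m, h0, h1, h2⟩
    exact complete h0 h1 h2

end Part1

namespace Part2

lemma abWord_inj_aux {M N δ : ℕ} (hδ : δ ≤ N)
    (h : ∀ i, abWord M i = abWord N (i + δ)) : M = N - δ := by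
  by_contra hne
  rcases Nat.lt_or_ge M (N - δ) with hlt | hge
  · have h2 := h M
    simp only [abWord] at h2
    rw [if_neg (by omega), if_pos (by omega)] at h2
    simp at h2
  · have hgt : N - δ < M := by omega
    have h2 := h (N - δ)
    simp only [abWord] at h2
    rw [if_pos (by omega), if_neg (by omega)] at h2
    simp at h2

lemma cnt_forced {Γ Q : Type} {C : AAPA Γ Q 1} {w : Fin 1 → ℕ → Γ} (r : C.Run w) :
    ∀ t, t ∈ r.tree → ∀ d : Fin 1, r.cnt t d = t.length - 1 := by
  intro t
  induction t using List.reverseRecOn with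
  | nil =>
    intro ht d
    rw [r.cnt_init [] ht (by simp)]
    rfl
  | append_singleton s x ih =>
    intro ht d
    have hs := r.prefix_closed s x ht
    by_cases h1 : s = []
    · subst h1
      rw [r.cnt_init _ ht (by simp)]
      rfl
    · obtain ⟨d0, hcnt, _⟩ := r.step s hs h1
      have h2 := hcnt x ht
      rw [h2, Subsingleton.elim d d0, Function.update_self, ih hs d0]
      have h4 := List.length_pos_iff.2 h1
      simp only [List.length_append, List.length_cons, List.length_nil]
      omega

lemma prefix_mem {Γ Q : Type} {n : ℕ} {A : AAPA Γ Q n} {w : Fin n → ℕ → Γ} (r : A.Run w) :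
    ∀ t, t ∈ r.tree → ∀ i, t.take i ∈ r.tree := by
  intro t
  induction t using List.reverseRecOn with
  | nil => intro ht i; simpa using ht
  | append_singleton s x ih =>
    intro ht i
    by_cases h : i ≤ s.length
    · rw [List.take_append_of_le_length h]
      exact ih (r.prefix_closed s x ht) i
    · rw [List.take_of_length_le (by simp; omega)]
      exact ht

def gT (T : Set (List ℕ)) (k1 : ℕ) (v : List ℕ → List ℕ) : Set (List ℕ) :=
  {t | (t.length ≤ k1 ∧ t ∈ T) ∨
    (k1 < t.length ∧ t.take k1 ∈ T ∧ v (t.take k1) ++ t.drop k1 ∈ T)}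

def gL {Q : Type} (lab : List ℕ → Q) (k1 : ℕ) (v : List ℕ → List ℕ) (t : List ℕ) : Q :=
  if t.length ≤ k1 then lab t else lab (v (t.take k1) ++ t.drop k1)

theorem graft_lang {Γ Q : Type} {C : AAPA Γ Q 1} {u u' : ℕ → Γ} {k1 k2 : ℕ}
    (hk1 : 1 ≤ k1) (hk12 : k1 < k2)
    (r : C.Run (fun _ => u)) (hacc : r.Accepting)
    (hsel : ∀ s, s ∈ r.tree → s.length = k1 →
      ∃ v, v ∈ r.tree ∧ v.length = k2 ∧ r.label v = r.label s)
    (hletJ : ∀ i, u' i = u (i + (k2 - k1)))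
    (hlow : ∀ i, i < k1 → u' i = u i) :
    (fun _ : Fin 1 => u') ∈ C.lang := by
  classical
  choose! vs hv1 hv2 hv3 using hsel
  have hchild_iff : ∀ (t : List ℕ) (mm : ℕ), k1 ≤ t.length →
      (t ++ [mm] ∈ gT r.tree k1 vs ↔
        (t.take k1 ∈ r.tree ∧ (vs (t.take k1) ++ t.drop k1) ++ [mm] ∈ r.tree)) := by
    intro t mm hle
    unfold gT
    simp only [Set.mem_setOf_eq, List.length_append, List.length_cons, List.length_nil]
    rw [List.take_append_of_le_length hle, List.drop_append_of_le_length hle]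
    constructor
    · rintro (⟨h1, _⟩ | ⟨_, h2, h3⟩)
      · omega
      · exact ⟨h2, by rwa [List.append_assoc]⟩
    · rintro ⟨h2, h3⟩
      exact Or.inr ⟨by omega, h2, by rwa [← List.append_assoc]⟩
  have hlab_child : ∀ (t : List ℕ) (mm : ℕ), k1 ≤ t.length →
      gL r.label k1 vs (t ++ [mm]) = r.label ((vs (t.take k1) ++ t.drop k1) ++ [mm]) := by
    intro t mm hle
    unfold gL
    rw [if_neg (by simp; omega), List.take_append_of_le_length hle,
      List.drop_append_of_le_length hle, ← List.append_assoc]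
  have hlab_low : ∀ t : List ℕ, t.length ≤ k1 → gL r.label k1 vs t = r.label t :=
    fun t h => if_pos h
  refine ⟨⟨gT r.tree k1 vs, gL r.label k1 vs, fun t _ => t.length - 1,
    Or.inl ⟨by simp, r.root_mem⟩, ?_, ?_, ?_, ?_, ?_⟩, ?_⟩
  · -- prefix_closed
    intro t mm h
    rcases h with ⟨h1, h2⟩ | ⟨h1, h2, h3⟩
    · exact Or.inl ⟨by simp at h1; omega, r.prefix_closed t mm h2⟩
    · have hle : k1 ≤ t.length := by simp at h1; omega
      rw [List.take_append_of_le_length hle] at h2 h3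
      rw [List.drop_append_of_le_length hle] at h3
      rcases Nat.lt_or_ge k1 t.length with hlt | hge
      · refine Or.inr ⟨hlt, h2, ?_⟩
        rw [← List.append_assoc] at h3
        exact r.prefix_closed _ mm h3
      · refine Or.inl ⟨by omega, ?_⟩
        rwa [List.take_of_length_le (by omega)] at h2
  · -- has_child
    intro t ht
    rcases ht with ⟨h1, h2⟩ | ⟨h1, h2, h3⟩
    · rcases Nat.lt_or_ge t.length k1 with hlt | hge
      · obtain ⟨mm, hm⟩ := r.has_child t h2
        exact ⟨mm, Or.inl ⟨by simp; omega, hm⟩⟩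
      · have heq : t.length = k1 := by omega
        have htake : t.take k1 = t := List.take_of_length_le (by omega)
        obtain ⟨mm, hm⟩ := r.has_child (vs t) (hv1 t h2 heq)
        refine ⟨mm, (hchild_iff t mm (by omega)).2 ⟨by rwa [htake], ?_⟩⟩
        rw [htake, List.drop_eq_nil_of_le (by omega), List.append_nil]
        exact hm
    · obtain ⟨mm, hm⟩ := r.has_child _ h3
      exact ⟨mm, (hchild_iff t mm (by omega)).2 ⟨h2, hm⟩⟩
  · -- cnt_init
    intro t _ hlen
    funext d
    show t.length - 1 = 0
    omega
  · -- init_sat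
    have hset : {q | ∃ mm : ℕ, [mm] ∈ gT r.tree k1 vs ∧ gL r.label k1 vs [mm] = q} =
        {q | ∃ mm : ℕ, [mm] ∈ r.tree ∧ r.label [mm] = q} := by
      ext q
      simp only [Set.mem_setOf_eq]
      constructor
      · rintro ⟨mm, hmem, hlab⟩
        rcases hmem with ⟨h1, h2⟩ | ⟨h1, _, _⟩
        · exact ⟨mm, h2, by rwa [hlab_low _ h1] at hlab⟩
        · simp at h1; omega
      · rintro ⟨mm, hmem, hlab⟩
        exact ⟨mm, Or.inl ⟨by simpa using hk1, hmem⟩,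
          by rw [hlab_low _ (by simpa using hk1)]; exact hlab⟩
    rw [hset]
    exact r.init_sat
  · -- step
    intro t ht hne
    refine ⟨0, ?_, ?_⟩
    · intro mm _
      funext d
      rw [Subsingleton.elim d (0 : Fin 1), Function.update_self]
      show (t ++ [mm]).length - 1 = t.length - 1 + 1
      have := List.length_pos_iff.2 hne
      simp only [List.length_append, List.length_cons, List.length_nil]
      omega
    · rcases ht with ⟨h1, h2⟩ | ⟨h1, h2, h3⟩
      · rcases Nat.lt_or_ge t.length k1 with hlt | hge
        · -- low internal node, kept as is
          obtain ⟨d0, _, hsat⟩ := r.step t h2 hne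
          rw [Subsingleton.elim d0 (0 : Fin 1)] at hsat
          rw [cnt_forced r t h2] at hsat
          have hsets : {q | ∃ mm : ℕ, t++[mm] ∈ gT r.tree k1 vs ∧
              gL r.label k1 vs (t++[mm]) = q}
              = {q | ∃ mm : ℕ, t++[mm] ∈ r.tree ∧ r.label (t++[mm]) = q} := by
            ext q
            simp only [Set.mem_setOf_eq]
            constructor
            · rintro ⟨mm, hmem, hlab⟩
              rcases hmem with ⟨hh1, hh2⟩ | ⟨hh1, _, _⟩
              · exact ⟨mm, hh2, by rwa [hlab_low _ hh1] at hlab⟩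
              · exfalso; simp at hh1; omega
            · rintro ⟨mm, hmem, hlab⟩
              exact ⟨mm, Or.inl ⟨by simp; omega, hmem⟩,
                by rw [hlab_low _ (by simp; omega)]; exact hlab⟩
          rw [hsets]
          show PosBool.Sat _ (C.trans (gL r.label k1 vs t) (u' (t.length - 1)) 0)
          rw [hlab_low _ (by omega), hlow (t.length - 1) (by omega)]
          exact hsat
        · -- boundary node: graft point
          have heq : t.length = k1 := by omega
          have htake : t.take k1 = t := List.take_of_length_le (by omega)
          have hvT := hv1 t h2 heq
          have hvlen := hv2 t h2 heq
          have hvlab := hv3 t h2 heq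
          have hvne : vs t ≠ [] := by
            intro h
            rw [h] at hvlen
            simp at hvlen
            omega
          obtain ⟨d0, _, hsat⟩ := r.step (vs t) hvT hvne
          rw [Subsingleton.elim d0 (0 : Fin 1)] at hsat
          rw [cnt_forced r _ hvT] at hsat
          have hsets : {q | ∃ mm : ℕ, t++[mm] ∈ gT r.tree k1 vs ∧
              gL r.label k1 vs (t++[mm]) = q}
              = {q | ∃ mm : ℕ, vs t ++ [mm] ∈ r.tree ∧ r.label (vs t ++ [mm]) = q} := by
            ext q
            simp only [Set.mem_setOf_eq]
            constructor
            · rintro ⟨mm, hmem, hlab⟩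
              rw [hchild_iff t mm (by omega)] at hmem
              rw [hlab_child t mm (by omega)] at hlab
              rw [htake, List.drop_eq_nil_of_le (by omega), List.append_nil] at hmem hlab
              exact ⟨mm, hmem.2, hlab⟩
            · rintro ⟨mm, hmem, hlab⟩
              refine ⟨mm, (hchild_iff t mm (by omega)).2 ⟨by rwa [htake], ?_⟩, ?_⟩
              · rw [htake, List.drop_eq_nil_of_le (by omega), List.append_nil]
                exact hmem
              · rw [hlab_child t mm (by omega), htake, List.drop_eq_nil_of_le (by omega),
                  List.append_nil]
                exact hlab
          rw [hsets]
          show PosBool.Sat _ (C.trans (gL r.label k1 vs t) (u' (t.length - 1)) 0)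
          rw [hlab_low _ (by omega)]
          have hl : u' (t.length - 1) = u ((vs t).length - 1) := by
            rw [hletJ]
            congr 1
            omega
          rw [hl, ← hvlab]
          exact hsat
      · -- deep grafted node
        have hge : k1 ≤ t.length := by omega
        have hzlen : (vs (t.take k1) ++ t.drop k1).length = k2 + (t.length - k1) := by
          have hlt : (t.take k1).length = k1 := by rw [List.length_take]; omega
          rw [List.length_append, hv2 _ h2 hlt, List.length_drop]
        have hzne : vs (t.take k1) ++ t.drop k1 ≠ [] := by
          intro h
          rw [h] at hzlen
          simp at hzlen
          omega
        obtain ⟨d0, _, hsat⟩ := r.step _ h3 hzne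
        rw [Subsingleton.elim d0 (0 : Fin 1)] at hsat
        rw [cnt_forced r _ h3] at hsat
        have hsets : {q | ∃ mm : ℕ, t++[mm] ∈ gT r.tree k1 vs ∧
            gL r.label k1 vs (t++[mm]) = q}
            = {q | ∃ mm : ℕ, (vs (t.take k1) ++ t.drop k1) ++ [mm] ∈ r.tree ∧
                r.label ((vs (t.take k1) ++ t.drop k1) ++ [mm]) = q} := by
          ext q
          simp only [Set.mem_setOf_eq]
          constructor
          · rintro ⟨mm, hmem, hlab⟩
            rw [hchild_iff t mm hge] at hmem
            rw [hlab_child t mm hge] at hlab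
            exact ⟨mm, hmem.2, hlab⟩
          · rintro ⟨mm, hmem, hlab⟩
            refine ⟨mm, (hchild_iff t mm hge).2 ⟨h2, hmem⟩, ?_⟩
            rw [hlab_child t mm hge]
            exact hlab
        rw [hsets]
        show PosBool.Sat _ (C.trans (gL r.label k1 vs t) (u' (t.length - 1)) 0)
        have hgl : gL r.label k1 vs t = r.label (vs (t.take k1) ++ t.drop k1) := by
          unfold gL
          rw [if_neg (by omega)]
        rw [hgl, hletJ]
        have hidx : t.length - 1 + (k2 - k1) = (vs (t.take k1) ++ t.drop k1).length - 1 := by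
          omega
        rw [hidx]
        exact hsat
  · -- accepting
    intro p' hp'
    have hplen : ∀ i, (p' i).length = i := by
      intro i
      induction i with
      | zero => rw [hp'.1]; rfl
      | succ n ih =>
        obtain ⟨mm, hm⟩ := (hp'.2 n).1
        rw [hm]
        simp only [List.length_append, List.length_cons, List.length_nil]
        omega
    have hp'mem : ∀ i, p' (i+1) ∈ gT r.tree k1 vs := fun i => (hp'.2 i).2
    have hk1T : p' k1 ∈ r.tree := by
      have h := hp'mem (k1 - 1)
      rw [show k1 - 1 + 1 = k1 from by omega] at h
      rcases h with ⟨_, h2⟩ | ⟨h1, _, _⟩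
      · exact h2
      · rw [hplen] at h1; omega
    have hk1len : (p' k1).length = k1 := hplen k1
    have hvT := hv1 _ hk1T hk1len
    have hvlen := hv2 _ hk1T hk1len
    have hvlab := hv3 _ hk1T hk1len
    have htake_p : ∀ j, (p' (k1 + j)).take k1 = p' k1 := by
      intro j
      induction j with
      | zero => exact List.take_of_length_le (by rw [hplen]; omega)
      | succ jj ih =>
        obtain ⟨mm, hm⟩ := (hp'.2 (k1 + jj)).1
        rw [show k1 + (jj+1) = (k1 + jj) + 1 from rfl, hm,
          List.take_append_of_le_length (by rw [hplen]; omega), ih]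
    have htake_p' : ∀ i, k1 ≤ i → (p' i).take k1 = p' k1 := by
      intro i hi
      obtain ⟨j, rfl⟩ : ∃ j, i = k1 + j := ⟨i - k1, by omega⟩
      exact htake_p j
    have hmem_graft : ∀ i, k1 < i → vs (p' k1) ++ (p' i).drop k1 ∈ r.tree := by
      intro i hi
      have h := hp'mem (i-1)
      rw [show i - 1 + 1 = i from by omega] at h
      rcases h with ⟨h1, _⟩ | ⟨_, _, h3⟩
      · rw [hplen] at h1; omega
      · rwa [htake_p' i (by omega)] at h3
    set P : ℕ → List ℕ :=
      fun i => if i ≤ k2 then (vs (p' k1)).take i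
        else vs (p' k1) ++ (p' (i - (k2 - k1))).drop k1 with hPdef
    have hPlow : ∀ i, i ≤ k2 → P i = (vs (p' k1)).take i := fun i h => if_pos h
    have hPeq : ∀ i, k2 ≤ i → P i = vs (p' k1) ++ (p' (i - (k2 - k1))).drop k1 := by
      intro i hi
      rcases Nat.eq_or_lt_of_le hi with heq | hlt
      · subst heq
        rw [hPlow k2 le_rfl, List.take_of_length_le (by omega),
          show k2 - (k2 - k1) = k1 from by omega,
          List.drop_eq_nil_of_le (by rw [hplen]), List.append_nil]
      · exact if_neg (by omega)
    have hPpath : r.IsPath P := by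
      constructor
      · rw [hPlow 0 (by omega)]
        rfl
      · intro i
        rcases Nat.lt_or_ge i k2 with hlt | hge
        · constructor
          · refine ⟨(vs (p' k1)).get ⟨i, by omega⟩, ?_⟩
            rw [hPlow (i+1) (by omega), hPlow i (by omega),
              ← List.take_concat_get (i := i) (by omega), List.concat_eq_append]
            simp [List.get_eq_getElem]
          · rw [hPlow (i+1) (by omega)]
            exact prefix_mem r _ hvT (i+1)
        · constructor
          · obtain ⟨mm, hm⟩ := (hp'.2 (i - (k2 - k1))).1
            refine ⟨mm, ?_⟩
            rw [hPeq (i+1) (by omega), hPeq i hge,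
              show i + 1 - (k2 - k1) = (i - (k2 - k1)) + 1 from by omega, hm,
              List.drop_append_of_le_length (by rw [hplen]; omega), ← List.append_assoc]
          · rw [hPeq (i+1) (by omega),
              show i + 1 - (k2 - k1) = (i - (k2 - k1)) + 1 from by omega]
            exact hmem_graft (i - (k2 - k1) + 1) (by omega)
    have hlabP : ∀ i, k1 ≤ i →
        gL r.label k1 vs (p' i) = r.label (P (i + (k2 - k1))) := by
      intro i hi
      rcases Nat.eq_or_lt_of_le hi with heq | hlt
      · subst heq
        rw [hlab_low _ (by rw [hplen])]
        rw [hPeq (k1 + (k2 - k1)) (by omega),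
          show k1 + (k2 - k1) - (k2 - k1) = k1 from by omega,
          List.drop_eq_nil_of_le (by rw [hplen]), List.append_nil]
        exact hvlab.symm
      · rw [gL, if_neg (by rw [hplen]; omega), htake_p' i (by omega)]
        rw [hPeq (i + (k2 - k1)) (by omega),
          show i + (k2 - k1) - (k2 - k1) = i from by omega]
    have hSeq : {c : ℕ | ∀ N : ℕ, ∃ i : ℕ, N ≤ i ∧
          C.prio (gL r.label k1 vs (p' i)) = c}
        = {c : ℕ | ∀ N : ℕ, ∃ i : ℕ, N ≤ i ∧ C.prio (r.label (P i)) = c} := by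
      ext c
      simp only [Set.mem_setOf_eq]
      constructor
      · intro hc N
        obtain ⟨i, hi, hci⟩ := hc (max N k1)
        refine ⟨i + (k2 - k1), by omega, ?_⟩
        rw [← hlabP i (by omega)]
        exact hci
      · intro hc N
        obtain ⟨i, hi, hci⟩ := hc (N + (k2 - k1) + k1)
        refine ⟨i - (k2 - k1), by omega, ?_⟩
        rw [hlabP (i - (k2 - k1)) (by omega),
          show i - (k2 - k1) + (k2 - k1) = i from by omega]
        exact hci
    rw [hSeq]
    exact hacc P hPpath

theorem part2 : ¬ ∃ (Q : Type) (_ : Fintype Q) (_ : Nonempty Q) (C : AAPA (Fin 3 → AB) Q 1),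
    lang1 C = encTuple '' abLang := by
  rintro ⟨Q, hQfin, hQne, C, hC⟩
  classical
  set N := Fintype.card (Finset Q) with hN
  set n := N + 2 with hn
  set wt : Fin 3 → ℕ → AB := fun i => abWord ((i.val + 1) * n) with hwt
  have htup : wt ∈ abLang := by
    refine ⟨n, ?_, ?_, ?_⟩
    · show abWord (((0 : Fin 3).val + 1) * n) = abWord n
      congr 1
      simp
    · show abWord (((1 : Fin 3).val + 1) * n) = abWord (2 * n)
      congr 1
    · show abWord (((2 : Fin 3).val + 1) * n) = abWord (3 * n)
      congr 1
  have hu : encTuple wt ∈ lang1 C := by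
    rw [hC]
    exact ⟨wt, htup, rfl⟩
  obtain ⟨r, hacc⟩ := hu
  set slice : ℕ → Finset Q := fun k =>
    Finset.univ.filter (fun q => ∃ t, t ∈ r.tree ∧ t.length = k ∧ r.label t = q) with hslice
  obtain ⟨a, b, hab, heq⟩ := Fintype.exists_ne_map_eq_of_card_lt
    (fun i : Fin (N+1) => slice (i.val + 1))
    (by rw [Fintype.card_fin]; omega)
  have hable : ∀ (x : Fin (N+1)), x.val + 1 ≤ n - 1 := fun x => by have := x.2; omega
  obtain ⟨k1, k2, hk1, hk12, hk2, hsl⟩ :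
      ∃ k1 k2, 1 ≤ k1 ∧ k1 < k2 ∧ k2 ≤ n - 1 ∧ slice k1 = slice k2 := by
    have hvne : a.val ≠ b.val := fun hh => hab (Fin.ext hh)
    rcases Nat.lt_or_ge a.val b.val with h | h
    · exact ⟨a.val+1, b.val+1, by omega, by omega, hable b, heq⟩
    · exact ⟨b.val+1, a.val+1, by omega, by omega, hable a, heq.symm⟩
  have hsel : ∀ s, s ∈ r.tree → s.length = k1 →
      ∃ v, v ∈ r.tree ∧ v.length = k2 ∧ r.label v = r.label s := by
    intro s hs hlen
    have hq : r.label s ∈ slice k1 :=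
      Finset.mem_filter.2 ⟨Finset.mem_univ _, s, hs, hlen, rfl⟩
    rw [hsl] at hq
    obtain ⟨-, t, ht, hlt, hlab⟩ := Finset.mem_filter.1 hq
    exact ⟨t, ht, hlt, hlab⟩
  have hlow : ∀ i, i < k1 →
      (fun j => encTuple wt (j + (k2 - k1))) i = encTuple wt i := by
    intro i hi
    funext x
    show wt x (i + (k2 - k1)) = wt x i
    show abWord ((x.val+1)*n) (i + (k2 - k1)) = abWord ((x.val+1)*n) i
    have hxn : n ≤ (x.val + 1) * n := Nat.le_mul_of_pos_left n (by omega)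
    unfold abWord
    rw [if_pos (by omega), if_pos (by omega)]
  have hu' := graft_lang (u' := fun j => encTuple wt (j + (k2 - k1)))
    hk1 hk12 r hacc hsel (fun i => rfl) hlow
  have hu'' : (fun j => encTuple wt (j + (k2 - k1))) ∈ lang1 C := hu'
  rw [hC] at hu''
  obtain ⟨wx, ⟨m, h0, h1, h2⟩, henc⟩ := hu''
  have e0 : ∀ i, abWord m i = abWord n (i + (k2 - k1)) := by
    intro i
    have h : wx 0 i = wt 0 (i + (k2 - k1)) := congrFun (congrFun henc i) 0
    rw [h0] at h
    rw [h]
    show abWord (((0 : Fin 3).val + 1) * n) _ = abWord n _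
    congr 1
    simp
  have e1 : ∀ i, abWord (2*m) i = abWord (2*n) (i + (k2 - k1)) := by
    intro i
    have h : wx 1 i = wt 1 (i + (k2 - k1)) := congrFun (congrFun henc i) 1
    rw [h1] at h
    rw [h]
    show abWord (((1 : Fin 3).val + 1) * n) _ = abWord (2*n) _
    congr 1
  have hm0 : m = n - (k2 - k1) := abWord_inj_aux (by omega) e0
  have hm1 : 2*m = 2*n - (k2 - k1) := abWord_inj_aux (by omega) e1
  omega

end Part2

/-- The language `L = {(aⁿ·b^ω, a²ⁿ·b^ω, a³ⁿ·b^ω) : n ∈ ℕ}` is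
recognized by a NAPA over `{a,b}` with three directions, but no APA over the
alphabet `{a,b}³` accepts exactly the encodings of the tuples in `L`. -/
theorem napa_beyond_omega_regular :
    (∃ (Q : Type) (_ : Fintype Q) (_ : Nonempty Q) (B : AAPA AB Q 3),
        B.IsNondet ∧ B.lang = abLang) ∧
    ¬ ∃ (Q : Type) (_ : Fintype Q) (_ : Nonempty Q) (C : AAPA (Fin 3 → AB) Q 1),
        lang1 C = encTuple '' abLang := by
  exact ⟨Part1.part1, Part2.part2⟩
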